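/- The measure μ on ℝ² with density dμ = (1+xy)^{-2} dx dy restricted to Ω = [0,1) × [0,1] is invariant under the natural extension map 𝒯(x,y) = (T(x), 1/(d(x)+y)), where T is the Gauss map and d(x) = ⌊1/x⌋. -/

import Mathlib

open MeasureTheory Set

lemma inv_Ioo {a b c : ℝ} (ha : 0 < a) (hc : c ∈ Set.Ioo a b) : c⁻¹ ∈ Set.Ioo b⁻¹ a⁻¹ :=
  ⟨inv_strictAnti₀ (lt_trans ha hc.1) hc.2, inv_strictAnti₀ ha hc.1⟩

lemma exists_mem_Ioo_nat {t : ℝ} (ht : t ∈ Set.Ioo (0:ℝ) 1)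
    (hne : ∀ k : ℕ, t ≠ ((k:ℝ))⁻¹) :
    ∃ n : ℕ, t ∈ Set.Ioo ((((n+1):ℕ):ℝ)+1)⁻¹ (((n+1):ℕ):ℝ)⁻¹ := by
  have ht0 : (0:ℝ) < t := ht.1
  have h1t : (1:ℝ) < t⁻¹ := by
    rw [← inv_one]
    exact inv_strictAnti₀ ht.1 ht.2
  have hm1 : (1:ℤ) ≤ ⌊t⁻¹⌋ := Int.le_floor.mpr (by exact_mod_cast h1t.le)
  obtain ⟨k, hk⟩ : ∃ k : ℕ, (k:ℤ) = ⌊t⁻¹⌋ :=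
    ⟨⌊t⁻¹⌋.toNat, Int.toNat_of_nonneg (le_trans zero_le_one hm1)⟩
  have hk1 : 1 ≤ k := by omega
  have hk0 : (0:ℝ) < (k:ℝ) := by exact_mod_cast hk1
  have hfl : ((k:ℕ):ℝ) ≤ t⁻¹ := by
    have := Int.floor_le t⁻¹
    rw [← hk] at this
    exact_mod_cast this
  have hfu : t⁻¹ < ((k:ℕ):ℝ) + 1 := by
    have := Int.lt_floor_add_one t⁻¹
    rw [← hk] at this
    exact_mod_cast this
  have hms : ((k:ℕ):ℝ) ≠ t⁻¹ := by
    intro h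
    apply hne k
    rw [h, inv_inv]
  have htm : t⁻¹ ∈ Set.Ioo ((k:ℕ):ℝ) (((k:ℕ):ℝ)+1) := ⟨lt_of_le_of_ne hfl hms, hfu⟩
  refine ⟨k - 1, ?_⟩
  have hnat : ((k - 1 + 1 : ℕ):ℝ) = ((k:ℕ):ℝ) := by
    congr 1
    omega
  rw [hnat]
  have := inv_Ioo hk0 htm
  rwa [inv_inv] at this

lemma null_compl_aux {U : Set (ℝ × ℝ)} {C D : Set ℝ} (hC : C.Countable) (hD : D.Countable)
    (hsub : (Set.Ico (0:ℝ) 1 ×ˢ Set.Icc (0:ℝ) 1) \ U ⊆ (C ×ˢ (Set.univ : Set ℝ)) ∪ ((Set.univ : Set ℝ) ×ˢ D)) :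
    volume ((Set.Ico (0:ℝ) 1 ×ˢ Set.Icc (0:ℝ) 1) \ U) = 0 := by
  apply measure_mono_null hsub
  apply measure_union_null
  · rw [Measure.volume_eq_prod, Measure.prod_prod, hC.measure_zero, zero_mul]
  · rw [Measure.volume_eq_prod, Measure.prod_prod, hD.measure_zero, mul_zero]

noncomputable def psiN (n : ℕ) : ℝ × ℝ → ℝ × ℝ := fun p => ((p.1 + n)⁻¹, p.2⁻¹ - n)
def Efun (n : ℕ) : Set (ℝ × ℝ) := Set.Ioo ((n:ℝ)+1)⁻¹ (n:ℝ)⁻¹ ×ˢ Set.Ioo 0 1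
def Ffun (n : ℕ) : Set (ℝ × ℝ) := Set.Ioo (0:ℝ) 1 ×ˢ Set.Ioo ((n:ℝ)+1)⁻¹ (n:ℝ)⁻¹

lemma Efun_meas (n : ℕ) : MeasurableSet (Efun n) := measurableSet_Ioo.prod measurableSet_Ioo
lemma Ffun_meas (n : ℕ) : MeasurableSet (Ffun n) := measurableSet_Ioo.prod measurableSet_Ioo

lemma nullE : volume ((Set.Ico (0:ℝ) 1 ×ˢ Set.Icc (0:ℝ) 1) \ ⋃ n : ℕ, Efun (n+1)) = 0 := by
  apply null_compl_aux (C := {0} ∪ Set.range (fun k : ℕ => ((k:ℝ))⁻¹)) (D := {0, 1})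
  · exact (Set.countable_singleton 0).union (Set.countable_range _)
  · exact (Set.toFinite ({0, 1} : Set ℝ)).countable
  · rintro ⟨x, y⟩ ⟨⟨hx, hy⟩, hnu⟩
    by_cases hxC : x ∈ ({0} ∪ Set.range (fun k : ℕ => ((k:ℝ))⁻¹) : Set ℝ)
    · exact Or.inl ⟨hxC, trivial⟩
    by_cases hyD : y ∈ ({0, 1} : Set ℝ)
    · exact Or.inr ⟨trivial, hyD⟩
    exfalso
    apply hnu
    simp only [Set.mem_union, Set.mem_singleton_iff, Set.mem_range, not_or, not_exists] at hxC
    have hx' : x ∈ Set.Ioo (0:ℝ) 1 := ⟨lt_of_le_of_ne hx.1 (Ne.symm hxC.1), hx.2⟩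
    obtain ⟨n, hn⟩ := exists_mem_Ioo_nat hx' (fun k h => hxC.2 k h.symm)
    have hy' : y ∈ Set.Ioo (0:ℝ) 1 := by
      simp only [Set.mem_insert_iff, Set.mem_singleton_iff, not_or] at hyD
      exact ⟨lt_of_le_of_ne hy.1 (Ne.symm hyD.1), lt_of_le_of_ne hy.2 hyD.2⟩
    exact Set.mem_iUnion.mpr ⟨n, ⟨hn, hy'⟩⟩

lemma nullF : volume ((Set.Ico (0:ℝ) 1 ×ˢ Set.Icc (0:ℝ) 1) \ ⋃ n : ℕ, Ffun (n+1)) = 0 := by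
  apply null_compl_aux (C := {0}) (D := {0, 1} ∪ Set.range (fun k : ℕ => ((k:ℝ))⁻¹))
  · exact Set.countable_singleton 0
  · exact (Set.toFinite ({0, 1} : Set ℝ)).countable.union (Set.countable_range _)
  · rintro ⟨x, y⟩ ⟨⟨hx, hy⟩, hnu⟩
    by_cases hxC : x ∈ ({0} : Set ℝ)
    · exact Or.inl ⟨hxC, trivial⟩
    by_cases hyD : y ∈ ({0, 1} ∪ Set.range (fun k : ℕ => ((k:ℝ))⁻¹) : Set ℝ)
    · exact Or.inr ⟨trivial, hyD⟩
    exfalso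
    apply hnu
    simp only [Set.mem_union, Set.mem_insert_iff, Set.mem_singleton_iff, Set.mem_range,
      not_or, not_exists] at hyD
    have hx' : x ∈ Set.Ioo (0:ℝ) 1 :=
      ⟨lt_of_le_of_ne hx.1 (fun h => hxC (by simp [← h])), hx.2⟩
    have hy' : y ∈ Set.Ioo (0:ℝ) 1 :=
      ⟨lt_of_le_of_ne hy.1 (Ne.symm hyD.1.1), lt_of_le_of_ne hy.2 hyD.1.2⟩
    obtain ⟨n, hn⟩ := exists_mem_Ioo_nat hy' (fun k h => hyD.2 k h.symm)
    exact Set.mem_iUnion.mpr ⟨n, ⟨hx', hn⟩⟩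

lemma det_prodMap_1d (A B : ℝ →L[ℝ] ℝ) :
    (A.prodMap B).det = A 1 * B 1 := by
  classical
  let b : Module.Basis Unit ℝ ℝ := Module.Basis.singleton Unit ℝ
  have h1 : (A.prodMap B).det
      = LinearMap.det ((A : ℝ →ₗ[ℝ] ℝ).prodMap (B : ℝ →ₗ[ℝ] ℝ)) := by
    rw [ContinuousLinearMap.det, ContinuousLinearMap.coe_prodMap]
  rw [h1, ← LinearMap.det_toMatrix (b.prod b),
    LinearMap.toMatrix_prodMap b b, Matrix.det_fromBlocks_zero₂₁,
    Matrix.det_unique, Matrix.det_unique]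
  simp [LinearMap.toMatrix_apply, b, Module.Basis.singleton]

lemma key_cov (n : ℕ) (hn : 1 ≤ n) {s : Set (ℝ × ℝ)} (hs : MeasurableSet s) :
    ∫⁻ p in psiN n '' (s ∩ Ffun n), ENNReal.ofReal (((1 + p.1 * p.2) ^ 2)⁻¹)
      = ∫⁻ p in s ∩ Ffun n, ENNReal.ofReal (((1 + p.1 * p.2) ^ 2)⁻¹) := by
  have hFm : MeasurableSet (Ffun n) := (measurableSet_Ioo).prod measurableSet_Ioo
  have hsm : MeasurableSet (s ∩ Ffun n) := hs.inter hFm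
  set f' : ℝ × ℝ → (ℝ × ℝ →L[ℝ] ℝ × ℝ) := fun p =>
    ((1 : ℝ →L[ℝ] ℝ).smulRight (-(1) / (p.1 + n)^2)).prodMap
      ((1 : ℝ →L[ℝ] ℝ).smulRight (-(1) / p.2^2)) with hf'def
  have hn0 : (0:ℝ) < n := by exact_mod_cast hn
  have hderiv : ∀ p ∈ s ∩ Ffun n, HasFDerivAt (psiN n) (f' p) p := by
    rintro ⟨u, v⟩ ⟨-, ⟨hu, hv⟩⟩
    have hu0 : (0:ℝ) < u := hu.1
    have hv0 : (0:ℝ) < v := lt_trans (by positivity) hv.1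
    have h1 : HasDerivAt (fun u : ℝ => (u + n)⁻¹) (-(1) / (u + n)^2) u := by
      exact ((hasDerivAt_id' u).add_const (n:ℝ)).inv (by positivity)
    have h2 : HasDerivAt (fun v : ℝ => v⁻¹ - (n:ℝ)) (-(1) / v^2) v := by
      simpa using ((hasDerivAt_id v).inv (ne_of_gt hv0)).sub_const (n:ℝ)
    exact h1.hasFDerivAt.prodMap (u, v) h2.hasFDerivAt
  have hinj : Set.InjOn (psiN n) (s ∩ Ffun n) := by
    rintro ⟨u, v⟩ ⟨-, ⟨hu, hv⟩⟩ ⟨u', v'⟩ ⟨-, ⟨hu', hv'⟩⟩ h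
    have h1 := congrArg Prod.fst h
    have h2 := congrArg Prod.snd h
    simp only [psiN] at h1 h2
    have hv0 : (0:ℝ) < v := lt_trans (by positivity) hv.1
    have hv0' : (0:ℝ) < v' := lt_trans (by positivity) hv'.1
    have : u + n = u' + n := by
      have := inv_injective h1; linarith [this]
    have huu : u = u' := by linarith
    have hvv : v = v' := by
      have : v⁻¹ = v'⁻¹ := by linarith
      exact inv_injective this
    simp [huu, hvv]
  rw [lintegral_image_eq_lintegral_abs_det_fderiv_mul volume hsm
      (fun p hp => (hderiv p hp).hasFDerivWithinAt) hinj]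
  apply setLIntegral_congr_fun_ae hsm
  apply Filter.Eventually.of_forall
  rintro ⟨u, v⟩ ⟨-, ⟨hu, hv⟩⟩
  have hu0 : (0:ℝ) < u := hu.1
  have hv0 : (0:ℝ) < v := lt_trans (by positivity) hv.1
  have hA : (0:ℝ) < u + n := by linarith
  have hdet : (f' (u, v)).det = ((u+n)^2 * v^2)⁻¹ := by
    rw [hf'def]
    rw [det_prodMap_1d]
    simp only [ContinuousLinearMap.smulRight_apply, ContinuousLinearMap.one_apply, one_smul]
    field_simp
  simp only [hdet, psiN]
  rw [abs_of_nonneg (by positivity), ← ENNReal.ofReal_mul (by positivity)]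
  congr 1
  have hkey : 1 + (u+(n:ℝ))⁻¹ * (v⁻¹ - n) = (1+u*v)/((u+n)*v) := by
    field_simp
    ring
  rw [hkey, div_pow, inv_div]
  rw [div_eq_mul_inv]
  have h1 : ((1:ℝ)+u*v) ≠ 0 := by positivity
  field_simp

lemma mem_Ioo_inv {a b c : ℝ} (ha : 0 < a) (hb : 0 < b)
    (hc : c ∈ Set.Ioo b⁻¹ a⁻¹) : c⁻¹ ∈ Set.Ioo a b := by
  have := inv_Ioo (inv_pos.mpr hb) hc
  simpa using this

lemma preimage_eq
    (T : ℝ → ℝ) (hT : ∀ y : ℝ, T y = if y = 0 then 0 else 1 / y - ⌊(1 : ℝ) / y⌋)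
    (𝒯 : ℝ × ℝ → ℝ × ℝ)
    (h𝒯 : ∀ p : ℝ × ℝ, 𝒯 p = (T p.1, 1 / ((⌊(1 : ℝ) / p.1⌋ : ℝ) + p.2)))
    (n : ℕ) (hn : 1 ≤ n) (s : Set (ℝ × ℝ)) :
    𝒯 ⁻¹' s ∩ Efun n = psiN n '' (s ∩ Ffun n) := by
  have hn0 : (0:ℝ) < n := by exact_mod_cast hn
  ext ⟨x, y⟩
  simp only [Efun, Ffun, Set.mem_inter_iff, Set.mem_preimage, Set.mem_prod, Set.mem_image]
  constructor
  · rintro ⟨hTs, ⟨hx, hy⟩⟩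
    have hx0 : (0:ℝ) < x := lt_trans (by positivity) hx.1
    have hinv : x⁻¹ ∈ Set.Ioo (n:ℝ) ((n:ℝ)+1) := mem_Ioo_inv hn0 (by positivity) hx
    have hfl : ⌊(1:ℝ)/x⌋ = (n:ℤ) := by
      rw [one_div, Int.floor_eq_iff]
      constructor <;> push_cast <;> [linarith [hinv.1]; linarith [hinv.2]]
    have hTx : T x = x⁻¹ - n := by
      rw [hT x, if_neg (ne_of_gt hx0), hfl, one_div]; push_cast; ring
    have hny : (0:ℝ) < (n:ℝ) + y := by linarith [hy.1]
    have h𝒯xy : 𝒯 (x, y) = (x⁻¹ - n, ((n:ℝ) + y)⁻¹) := by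
      rw [h𝒯]; simp only [hfl]; rw [hTx, one_div]; push_cast; ring_nf
    refine ⟨(x⁻¹ - n, ((n:ℝ) + y)⁻¹), ⟨?_, ?_, ?_⟩, ?_⟩
    · rw [← h𝒯xy]; exact hTs
    · constructor <;> simp only [] <;> [linarith [hinv.1]; linarith [hinv.2]]
    · have : (n:ℝ) + y ∈ Set.Ioo (n:ℝ) ((n:ℝ)+1) := ⟨by linarith [hy.1], by linarith [hy.2]⟩
      exact inv_Ioo hn0 this
    · simp only [psiN]
      rw [sub_add_cancel, inv_inv, inv_inv, add_sub_cancel_left]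
  · rintro ⟨⟨u, v⟩, ⟨hsv, ⟨hu, hv⟩⟩, hpsi⟩
    have hv0 : (0:ℝ) < v := lt_trans (by positivity) hv.1
    have hun : u + (n:ℝ) ∈ Set.Ioo (n:ℝ) ((n:ℝ)+1) := ⟨by linarith [hu.1], by linarith [hu.2]⟩
    have hvinv : v⁻¹ ∈ Set.Ioo (n:ℝ) ((n:ℝ)+1) := mem_Ioo_inv hn0 (by positivity) hv
    rw [Prod.ext_iff] at hpsi
    simp only [psiN] at hpsi
    obtain ⟨hx', hy'⟩ := hpsi
    subst hx'
    subst hy'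
    have hun0 : (0:ℝ) < u + n := lt_trans hn0 hun.1
    set x := (u + (n:ℝ))⁻¹ with hx'
    set y := v⁻¹ - (n:ℝ) with hy'
    have hx0 : (0:ℝ) < x := by rw [hx']; positivity
    have h1x : (1:ℝ) / x = u + n := by rw [hx', one_div, inv_inv]
    have hfl : ⌊(1:ℝ)/x⌋ = (n:ℤ) := by
      rw [h1x, Int.floor_eq_iff]
      constructor <;> push_cast <;> [linarith [hu.1]; linarith [hu.2]]
    refine ⟨?_, ?_, ?_⟩
    · show 𝒯 (x, y) ∈ s
      have h𝒯xy : 𝒯 (x, y) = (u, v) := by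
        rw [h𝒯]
        simp only [hfl]
        rw [hT, if_neg (ne_of_gt hx0), hfl, h1x, hy']
        push_cast
        rw [show (n:ℝ) + (v⁻¹ - n) = v⁻¹ by ring, one_div, inv_inv]
        norm_num
      rw [h𝒯xy]; exact hsv
    · rw [hx']; exact inv_Ioo hn0 hun
    · rw [hy']
      exact ⟨by linarith [hvinv.1], by linarith [hvinv.2]⟩

lemma inv_le_inv_nat {m k : ℕ} (h : m + 1 ≤ k) : ((k:ℝ))⁻¹ ≤ ((m:ℝ)+1)⁻¹ := by
  apply inv_anti₀ (by positivity)
  exact_mod_cast h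

lemma Ioo_inv_disjoint {m k : ℕ} (hm : 1 ≤ m) (hk : 1 ≤ k) (hmk : m ≠ k) :
    Disjoint (Set.Ioo (((m:ℝ))+1)⁻¹ ((m:ℝ))⁻¹) (Set.Ioo (((k:ℝ))+1)⁻¹ ((k:ℝ))⁻¹) := by
  wlog h : m < k generalizing m k
  · exact (this hk hm hmk.symm (by omega)).symm
  apply Set.disjoint_left.mpr
  intro t ht1 ht2
  have : ((k:ℝ))⁻¹ ≤ ((m:ℝ)+1)⁻¹ := inv_le_inv_nat (by omega)
  linarith [ht1.1, ht2.2]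

lemma Efun_subset (n : ℕ) : Efun (n+1) ⊆ Set.Ico (0:ℝ) 1 ×ˢ Set.Icc (0:ℝ) 1 := by
  rintro ⟨x, y⟩ ⟨hx, hy⟩
  have hb : ((((n+1):ℕ)):ℝ)⁻¹ ≤ 1 := by
    apply inv_le_one_of_one_le₀
    exact_mod_cast Nat.succ_le_succ (Nat.zero_le n)
  exact ⟨⟨le_of_lt (lt_trans (by positivity) hx.1), lt_of_lt_of_le hx.2 hb⟩,
    ⟨le_of_lt hy.1, le_of_lt hy.2⟩⟩

lemma Ffun_subset (n : ℕ) : Ffun (n+1) ⊆ Set.Ico (0:ℝ) 1 ×ˢ Set.Icc (0:ℝ) 1 := by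
  rintro ⟨x, y⟩ ⟨hx, hy⟩
  have hb : ((((n+1):ℕ)):ℝ)⁻¹ ≤ 1 := by
    apply inv_le_one_of_one_le₀
    exact_mod_cast Nat.succ_le_succ (Nat.zero_le n)
  exact ⟨⟨le_of_lt hx.1, hx.2⟩,
    ⟨le_of_lt (lt_trans (by positivity) hy.1), le_of_lt (lt_of_lt_of_le hy.2 hb)⟩⟩


open MeasureTheory

/-- The measure with density `(1+xy)^{-2}` with respect to Lebesgue
measure restricted to `Ω = [0,1) × [0,1]` is invariant under the natural extension
map `𝒯(x,y) = (T(x), 1/(⌊1/x⌋ + y))` of the Gauss map `T`. -/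
theorem natural_extension_measure_invariant
    (T : ℝ → ℝ) (hT : ∀ y : ℝ, T y = if y = 0 then 0 else 1 / y - ⌊(1 : ℝ) / y⌋)
    (𝒯 : ℝ × ℝ → ℝ × ℝ)
    (h𝒯 : ∀ p : ℝ × ℝ, 𝒯 p = (T p.1, 1 / ((⌊(1 : ℝ) / p.1⌋ : ℝ) + p.2)))
    (Ω : Set (ℝ × ℝ)) (hΩ : Ω = Set.Ico (0 : ℝ) 1 ×ˢ Set.Icc (0 : ℝ) 1)
    (μ : Measure (ℝ × ℝ))
    (hμ : μ = (volume.restrict Ω).withDensity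
        (fun p => ENNReal.ofReal (((1 + p.1 * p.2) ^ 2)⁻¹))) :
    μ.map 𝒯 = μ := by
  have hTm : Measurable T := by
    have hfun : T = fun y : ℝ => if y = 0 then 0 else 1 / y - ⌊(1:ℝ)/y⌋ := funext hT
    rw [hfun]
    apply Measurable.ite (measurableSet_eq) measurable_const
    exact (measurable_const.div measurable_id).sub
      ((measurable_of_countable _).comp ((measurable_const.div measurable_id).floor))
  have h𝒯m : Measurable 𝒯 := by
    have hfun : 𝒯 = fun p : ℝ × ℝ => (T p.1, 1 / ((⌊(1:ℝ)/p.1⌋ : ℝ) + p.2)) := funext h𝒯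
    rw [hfun]
    apply Measurable.prod
    · exact hTm.comp measurable_fst
    · exact measurable_const.div
        (((measurable_of_countable _).comp
          ((measurable_const.div measurable_fst).floor)).add measurable_snd)
  subst hΩ
  subst hμ
  apply Measure.ext
  intro s hs
  rw [Measure.map_apply h𝒯m hs,
    withDensity_apply _ (h𝒯m hs), withDensity_apply _ hs,
    Measure.restrict_restrict (h𝒯m hs), Measure.restrict_restrict hs]
  set Ω₀ : Set (ℝ × ℝ) := Set.Ico (0:ℝ) 1 ×ˢ Set.Icc (0:ℝ) 1 with hΩ₀
  have hUE : (⋃ n : ℕ, Efun (n+1)) ⊆ Ω₀ := Set.iUnion_subset fun n => Efun_subset n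
  have hUF : (⋃ n : ℕ, Ffun (n+1)) ⊆ Ω₀ := Set.iUnion_subset fun n => Ffun_subset n
  have haeE : (𝒯 ⁻¹' s ∩ Ω₀ : Set (ℝ × ℝ)) =ᵐ[volume] (𝒯 ⁻¹' s ∩ ⋃ n : ℕ, Efun (n+1) : Set (ℝ × ℝ)) := by
    rw [ae_eq_set]
    constructor
    · apply measure_mono_null _ nullE
      rintro p ⟨⟨hp1, hp2⟩, hp3⟩
      exact ⟨hp2, fun h => hp3 ⟨hp1, h⟩⟩
    · have hsub2 : (𝒯 ⁻¹' s ∩ ⋃ n : ℕ, Efun (n+1)) ⊆ 𝒯 ⁻¹' s ∩ Ω₀ :=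
        fun p hp => ⟨hp.1, hUE hp.2⟩
      rw [Set.diff_eq_empty.mpr hsub2]
      exact measure_empty
  have haeF : (s ∩ Ω₀ : Set (ℝ × ℝ)) =ᵐ[volume] (s ∩ ⋃ n : ℕ, Ffun (n+1) : Set (ℝ × ℝ)) := by
    rw [ae_eq_set]
    constructor
    · apply measure_mono_null _ nullF
      rintro p ⟨⟨hp1, hp2⟩, hp3⟩
      exact ⟨hp2, fun h => hp3 ⟨hp1, h⟩⟩
    · have hsub2 : (s ∩ ⋃ n : ℕ, Ffun (n+1)) ⊆ s ∩ Ω₀ :=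
        fun p hp => ⟨hp.1, hUF hp.2⟩
      rw [Set.diff_eq_empty.mpr hsub2]
      exact measure_empty
  rw [setLIntegral_congr haeE, setLIntegral_congr haeF,
    Set.inter_iUnion, Set.inter_iUnion]
  have hdE : Pairwise (Function.onFun Disjoint fun n : ℕ => 𝒯 ⁻¹' s ∩ Efun (n+1)) := by
    intro a b hab
    have hD : Disjoint (Efun (a+1)) (Efun (b+1)) := by
      apply Set.disjoint_left.mpr
      rintro ⟨x, y⟩ ⟨hx1, -⟩ ⟨hx2, -⟩
      exact Set.disjoint_left.mp
        (Ioo_inv_disjoint (Nat.le_add_left 1 a) (Nat.le_add_left 1 b) (by omega)) hx1 hx2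
    exact hD.mono Set.inter_subset_right Set.inter_subset_right
  have hdF : Pairwise (Function.onFun Disjoint fun n : ℕ => s ∩ Ffun (n+1)) := by
    intro a b hab
    have hD : Disjoint (Ffun (a+1)) (Ffun (b+1)) := by
      apply Set.disjoint_left.mpr
      rintro ⟨x, y⟩ ⟨-, hy1⟩ ⟨-, hy2⟩
      exact Set.disjoint_left.mp
        (Ioo_inv_disjoint (Nat.le_add_left 1 a) (Nat.le_add_left 1 b) (by omega)) hy1 hy2
    exact hD.mono Set.inter_subset_right Set.inter_subset_right
  rw [lintegral_iUnion (fun n => (h𝒯m hs).inter (Efun_meas _)) hdE,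
    lintegral_iUnion (fun n => hs.inter (Ffun_meas _)) hdF]
  apply tsum_congr
  intro n
  rw [preimage_eq T hT 𝒯 h𝒯 (n+1) (Nat.le_add_left 1 n) s,
    key_cov (n+1) (Nat.le_add_left 1 n) hs]
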